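/- For every subset S of the symmetric n×n matrices over a commutative unital ring R, the image p(M_S^n) of the quadratic module generated by S under the (1,1)-entry map equals the quadratic module in R generated by S' = {v^T A v : A ∈ S, v ∈ R^n}. -/

import Mathlib

open Matrix

/-- A quadratic module in `M_n(R)`. -/
def IsQM {n : ℕ} {R : Type*} [CommRing R] (M : Set (Matrix (Fin n) (Fin n) R)) : Prop :=
  (∀ A ∈ M, A.IsSymm) ∧ (1 : Matrix (Fin n) (Fin n) R) ∈ M ∧
  (∀ a ∈ M, ∀ b ∈ M, a + b ∈ M) ∧
  ∀ (A : Matrix (Fin n) (Fin n) R), ∀ m ∈ M, Aᵀ * m * A ∈ M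

/-- The smallest quadratic module of `M_n(R)` containing `S`. -/
def QMgen {n : ℕ} {R : Type*} [CommRing R] (S : Set (Matrix (Fin n) (Fin n) R)) :
    Set (Matrix (Fin n) (Fin n) R) :=
  ⋂₀ {M | IsQM M ∧ S ⊆ M}

/-- A quadratic module in a commutative ring `R`. -/
def IsQMR {R : Type*} [CommRing R] (M : Set R) : Prop :=
  1 ∈ M ∧ (∀ a ∈ M, ∀ b ∈ M, a + b ∈ M) ∧ ∀ r : R, ∀ m ∈ M, r ^ 2 * m ∈ M

/-- The smallest quadratic module of `R` containing `G`. -/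
def QMgenR {R : Type*} [CommRing R] (G : Set R) : Set R :=
  ⋂₀ {M | IsQMR M ∧ G ⊆ M}

section Aux

variable {n : ℕ} {R : Type*} [CommRing R]

lemma QMgen_subset {S : Set (Matrix (Fin n) (Fin n) R)} : S ⊆ QMgen S := by
  intro a ha M hM
  exact hM.2 ha

lemma QMgen_one {S : Set (Matrix (Fin n) (Fin n) R)} : (1 : Matrix (Fin n) (Fin n) R) ∈ QMgen S := by
  intro M hM
  exact hM.1.2.1

lemma QMgen_add {S : Set (Matrix (Fin n) (Fin n) R)} {a b : Matrix (Fin n) (Fin n) R}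
    (ha : a ∈ QMgen S) (hb : b ∈ QMgen S) : a + b ∈ QMgen S := by
  intro M hM
  exact hM.1.2.2.1 a (ha M hM) b (hb M hM)

lemma QMgen_congr {S : Set (Matrix (Fin n) (Fin n) R)} (A : Matrix (Fin n) (Fin n) R)
    {m : Matrix (Fin n) (Fin n) R} (hm : m ∈ QMgen S) : Aᵀ * m * A ∈ QMgen S := by
  intro M hM
  exact hM.1.2.2.2 A m (hm M hM)

lemma QMgen_le {S M : Set (Matrix (Fin n) (Fin n) R)} (h1 : IsQM M) (h2 : S ⊆ M) :
    QMgen S ⊆ M := fun _ ha => ha M ⟨h1, h2⟩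

lemma QMgenR_subset {G : Set R} : G ⊆ QMgenR G := fun a ha M hM => hM.2 ha

lemma QMgenR_one {G : Set R} : (1 : R) ∈ QMgenR G := fun M hM => hM.1.1

lemma QMgenR_add {G : Set R} {a b : R} (ha : a ∈ QMgenR G) (hb : b ∈ QMgenR G) :
    a + b ∈ QMgenR G := fun M hM => hM.1.2.1 a (ha M hM) b (hb M hM)

lemma QMgenR_sq_mul {G : Set R} (r : R) {m : R} (hm : m ∈ QMgenR G) :
    r ^ 2 * m ∈ QMgenR G := fun M hM => hM.1.2.2 r m (hm M hM)

lemma QMgenR_zero {G : Set R} : (0 : R) ∈ QMgenR G := by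
  have := QMgenR_sq_mul (G := G) (0 : R) QMgenR_one
  simpa using this

lemma QMgenR_sq {G : Set R} (r : R) : r ^ 2 ∈ QMgenR G := by
  have := QMgenR_sq_mul (G := G) r QMgenR_one
  simpa using this

lemma QMgenR_sum {G : Set R} {ι : Type*} (s : Finset ι) (f : ι → R)
    (hf : ∀ i ∈ s, f i ∈ QMgenR G) : (∑ i ∈ s, f i) ∈ QMgenR G := by
  classical
  induction s using Finset.induction_on with
  | empty => simpa using QMgenR_zero
  | insert _ _ hx ih =>
    rw [Finset.sum_insert hx]
    exact QMgenR_add (hf _ (Finset.mem_insert_self _ _))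
      (ih fun i hi => hf i (Finset.mem_insert_of_mem hi))

lemma QMgenR_le {G M : Set R} (h1 : IsQMR M) (h2 : G ⊆ M) : QMgenR G ⊆ M :=
  fun _ ha => ha M ⟨h1, h2⟩

lemma dot_congr {A m : Matrix (Fin n) (Fin n) R} (v : Fin n → R) :
    v ⬝ᵥ (Aᵀ * m * A) *ᵥ v = (A *ᵥ v) ⬝ᵥ m *ᵥ (A *ᵥ v) := by
  rw [← mulVec_mulVec, ← mulVec_mulVec, dotProduct_mulVec, vecMul_transpose]

end Aux

theorem stmt1 {n : ℕ} [NeZero n] {R : Type*} [CommRing R]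
    (S : Set (Matrix (Fin n) (Fin n) R)) (hS : ∀ A ∈ S, A.IsSymm) :
    (fun A : Matrix (Fin n) (Fin n) R => A 0 0) '' QMgen S =
      QMgenR {x : R | ∃ A ∈ S, ∃ v : Fin n → R, x = v ⬝ᵥ A.mulVec v} := by
  classical
  set G : Set R := {x : R | ∃ A ∈ S, ∃ v : Fin n → R, x = v ⬝ᵥ A.mulVec v} with hG
  apply Set.Subset.antisymm
  · -- forward direction
    rintro x ⟨A, hA, rfl⟩
    -- the test quadratic module
    set M : Set (Matrix (Fin n) (Fin n) R) :=
      {B | B.IsSymm ∧ ∀ v : Fin n → R, v ⬝ᵥ B *ᵥ v ∈ QMgenR G} with hM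
    have hQM : IsQM M := by
      refine ⟨fun B hB => hB.1, ⟨isSymm_one, fun v => ?_⟩, ?_, ?_⟩
      · have : v ⬝ᵥ (1 : Matrix (Fin n) (Fin n) R) *ᵥ v = ∑ i, (v i) ^ 2 := by
          simp [dotProduct, sq]
        rw [this]
        exact QMgenR_sum _ _ fun i _ => QMgenR_sq _
      · rintro a ⟨ha1, ha2⟩ b ⟨hb1, hb2⟩
        refine ⟨ha1.add hb1, fun v => ?_⟩
        rw [add_mulVec, dotProduct_add]
        exact QMgenR_add (ha2 v) (hb2 v)
      · rintro B m ⟨hm1, hm2⟩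
        constructor
        · unfold Matrix.IsSymm at *
          rw [transpose_mul, transpose_mul, transpose_transpose, hm1, mul_assoc]
        · intro v
          rw [dot_congr]
          exact hm2 (B *ᵥ v)
    have hSM : S ⊆ M := by
      intro B hB
      exact ⟨hS B hB, fun v => QMgenR_subset ⟨B, hB, v, rfl⟩⟩
    have hAM : A ∈ M := QMgen_le hQM hSM hA
    have key : A 0 0 = (Pi.single (0:Fin n) (1:R)) ⬝ᵥ A *ᵥ (Pi.single 0 1) := by
      simp [Matrix.mulVec_single, dotProduct, Pi.single_apply]
    show A 0 0 ∈ QMgenR G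
    rw [key]
    exact hAM.2 _
  · -- backward direction
    apply QMgenR_le
    · refine ⟨⟨1, QMgen_one, rfl⟩, ?_, ?_⟩
      · rintro a ⟨A, hA, rfl⟩ b ⟨B, hB, rfl⟩
        exact ⟨A + B, QMgen_add hA hB, rfl⟩
      · rintro r m ⟨A, hA, rfl⟩
        refine ⟨(r • (1 : Matrix (Fin n) (Fin n) R))ᵀ * A * (r • 1), QMgen_congr _ hA, ?_⟩
        simp [Matrix.mul_apply, Matrix.one_apply, sq, Finset.sum_ite_eq', mul_comm, mul_assoc, mul_left_comm]
    · rintro x ⟨A, hA, v, rfl⟩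
      refine ⟨(Matrix.of fun i j => if j = (0:Fin n) then v i else 0)ᵀ * A *
        (Matrix.of fun i j => if j = (0:Fin n) then v i else 0),
        QMgen_congr _ (QMgen_subset hA), ?_⟩
      simp only [Matrix.mul_apply, dotProduct, Matrix.mulVec, transpose_apply, of_apply,
        if_pos rfl, Finset.mul_sum, Finset.sum_mul, mul_ite, ite_mul, mul_zero, zero_mul,
        Finset.sum_ite_eq', Finset.mem_univ, if_true]
      rw [Finset.sum_comm]
      apply Finset.sum_congr rfl; intros; apply Finset.sum_congr rfl; intros; ring
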